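/- Let H be a complex Hilbert space, ψ ∈ H a unit vector, and A₀, A₁, A₂, B₀, B₁, B₂ : H →L[ℂ] H bounded self-adjoint operators, each squaring to the identity, with every Aᵢ commuting with every Bⱼ. Let d = re⟪ψ, (A₀A₁ + A₁A₀)ψ⟫/2, e = re⟪ψ, (A₀A₂ + A₂A₀)ψ⟫/2, f = re⟪ψ, (A₁A₂ + A₂A₁)ψ⟫/2, and let B' = re⟪ψ, (A₀B₀ + A₁B₀ − A₂B₀ + A₀B₁ + A₁B₁ + A₂B₁ − A₀B₂ + A₁B₂)ψ⟫. Then |B'| ≤ √(3 + 2d − 2(e + f)) + √(3 + 2d + 2(e + f)) + √(2 − 2d). -/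

import Mathlib

private lemma i3322_key {H : Type*} [NormedAddCommGroup H] [InnerProductSpace ℂ H]
    [CompleteSpace H] (ψ : H) (hψ : ‖ψ‖ = 1) (S B : H →L[ℂ] H)
    (hS : IsSelfAdjoint S) (hB : IsSelfAdjoint B) (hB2 : B * B = 1) :
    |(inner ℂ ψ ((S * B) ψ) : ℂ).re| ≤ Real.sqrt ((inner ℂ ψ ((S * S) ψ) : ℂ).re) := by
  have hSsym := (ContinuousLinearMap.isSelfAdjoint_iff_isSymmetric.mp hS)
  have hBsym := (ContinuousLinearMap.isSelfAdjoint_iff_isSymmetric.mp hB)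
  have h1 : (inner ℂ ψ ((S * B) ψ) : ℂ) = inner ℂ (S ψ) (B ψ) := by
    simpa [ContinuousLinearMap.mul_apply] using (hSsym ψ (B ψ)).symm
  have h2 : (inner ℂ ψ ((S * S) ψ) : ℂ).re = ‖S ψ‖ ^ 2 := by
    have h : (inner ℂ ψ ((S * S) ψ) : ℂ) = inner ℂ (S ψ) (S ψ) := by
      simpa [ContinuousLinearMap.mul_apply] using (hSsym ψ (S ψ)).symm
    rw [h]
    exact inner_self_eq_norm_sq (𝕜 := ℂ) (S ψ)
  have hBn : ‖B ψ‖ = 1 := by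
    have h3 : (inner ℂ (B ψ) (B ψ) : ℂ) = inner ℂ ψ ψ := by
      calc (inner ℂ (B ψ) (B ψ) : ℂ) = inner ℂ ψ (B (B ψ)) := (hBsym (B ψ) ψ).symm ▸ hBsym ψ (B ψ)
        _ = inner ℂ ψ ((B * B) ψ) := by simp [ContinuousLinearMap.mul_apply]
        _ = inner ℂ ψ ψ := by rw [hB2]; simp
    have h4 : (‖B ψ‖ : ℝ) ^ 2 = ‖ψ‖ ^ 2 := by
      have ha : (inner ℂ (B ψ) (B ψ) : ℂ).re = ‖B ψ‖ ^ 2 := inner_self_eq_norm_sq (𝕜 := ℂ) (B ψ)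
      have hb : (inner ℂ ψ ψ : ℂ).re = ‖ψ‖ ^ 2 := inner_self_eq_norm_sq (𝕜 := ℂ) ψ
      rw [← ha, ← hb, h3]
    nlinarith [norm_nonneg (B ψ), norm_nonneg ψ]
  rw [h1, h2, Real.sqrt_sq (norm_nonneg _)]
  calc |(inner ℂ (S ψ) (B ψ) : ℂ).re| ≤ ‖(inner ℂ (S ψ) (B ψ) : ℂ)‖ := Complex.abs_re_le_norm _
    _ ≤ ‖S ψ‖ * ‖B ψ‖ := norm_inner_le_norm _ _
    _ = ‖S ψ‖ := by rw [hBn, mul_one]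

/-- In the quantum I₃₃₂₂-type scenario with three ±1-valued
observables per party, the symmetrized I₃₃₂₂ Bell expression `B'` satisfies
`|B'| ≤ √(3 + 2d - 2(e + f)) + √(3 + 2d + 2(e + f)) + √(2 - 2d)`, where
`d = ⟨{A₀,A₁}⟩/2`, `e = ⟨{A₀,A₂}⟩/2`, `f = ⟨{A₁,A₂}⟩/2`. -/
theorem i3322_quantum_bound
    {H : Type*} [NormedAddCommGroup H] [InnerProductSpace ℂ H] [CompleteSpace H]
    (ψ : H) (hψ : ‖ψ‖ = 1)
    (A₀ A₁ A₂ B₀ B₁ B₂ : H →L[ℂ] H)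
    (hsa : ∀ X ∈ [A₀, A₁, A₂, B₀, B₁, B₂], IsSelfAdjoint X)
    (hsq : ∀ X ∈ [A₀, A₁, A₂, B₀, B₁, B₂], X * X = 1)
    (hAB : ∀ i ∈ [A₀, A₁, A₂], ∀ j ∈ [B₀, B₁, B₂], i * j = j * i)
    (d e f : ℝ)
    (hd : d = (inner ℂ ψ ((A₀ * A₁ + A₁ * A₀) ψ) : ℂ).re / 2)
    (he : e = (inner ℂ ψ ((A₀ * A₂ + A₂ * A₀) ψ) : ℂ).re / 2)
    (hf : f = (inner ℂ ψ ((A₁ * A₂ + A₂ * A₁) ψ) : ℂ).re / 2) :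
    |(inner ℂ ψ ((A₀ * B₀ + A₁ * B₀ - A₂ * B₀ + A₀ * B₁ + A₁ * B₁ + A₂ * B₁
        - A₀ * B₂ + A₁ * B₂) ψ) : ℂ).re| ≤
      Real.sqrt (3 + 2 * d - 2 * (e + f)) + Real.sqrt (3 + 2 * d + 2 * (e + f)) +
        Real.sqrt (2 - 2 * d) := by
  have sA0 : IsSelfAdjoint A₀ := hsa _ (by simp)
  have sA1 : IsSelfAdjoint A₁ := hsa _ (by simp)
  have sA2 : IsSelfAdjoint A₂ := hsa _ (by simp)
  have sB0 : IsSelfAdjoint B₀ := hsa _ (by simp)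
  have sB1 : IsSelfAdjoint B₁ := hsa _ (by simp)
  have sB2 : IsSelfAdjoint B₂ := hsa _ (by simp)
  have qA0 : A₀ * A₀ = 1 := hsq _ (by simp)
  have qA1 : A₁ * A₁ = 1 := hsq _ (by simp)
  have qA2 : A₂ * A₂ = 1 := hsq _ (by simp)
  have qB0 : B₀ * B₀ = 1 := hsq _ (by simp)
  have qB1 : B₁ * B₁ = 1 := hsq _ (by simp)
  have qB2 : B₂ * B₂ = 1 := hsq _ (by simp)
  set S₀ := A₀ + A₁ - A₂ with hS₀
  set S₁ := A₀ + A₁ + A₂ with hS₁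
  set S₂ := A₁ - A₀ with hS₂
  have sS0 : IsSelfAdjoint S₀ := (sA0.add sA1).sub sA2
  have sS1 : IsSelfAdjoint S₁ := (sA0.add sA1).add sA2
  have sS2 : IsSelfAdjoint S₂ := sA1.sub sA0
  have hψ2 : (inner ℂ ψ ψ : ℂ).re = 1 := by
    have hb : (inner ℂ ψ ψ : ℂ).re = ‖ψ‖ ^ 2 := inner_self_eq_norm_sq (𝕜 := ℂ) ψ
    rw [hb, hψ]; norm_num
  have hT : A₀ * B₀ + A₁ * B₀ - A₂ * B₀ + A₀ * B₁ + A₁ * B₁ + A₂ * B₁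
      - A₀ * B₂ + A₁ * B₂ = S₀ * B₀ + S₁ * B₁ + S₂ * B₂ := by
    rw [hS₀, hS₁, hS₂]; noncomm_ring
  have hsplit : (inner ℂ ψ ((A₀ * B₀ + A₁ * B₀ - A₂ * B₀ + A₀ * B₁ + A₁ * B₁ + A₂ * B₁
      - A₀ * B₂ + A₁ * B₂) ψ) : ℂ).re
      = (inner ℂ ψ ((S₀ * B₀) ψ) : ℂ).re + (inner ℂ ψ ((S₁ * B₁) ψ) : ℂ).re
        + (inner ℂ ψ ((S₂ * B₂) ψ) : ℂ).re := by
    rw [hT]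
    simp [ContinuousLinearMap.add_apply, inner_add_right]
  have hsq0 : (inner ℂ ψ ((S₀ * S₀) ψ) : ℂ).re = 3 + 2 * d - 2 * (e + f) := by
    have hexp : S₀ * S₀ = (1 : H →L[ℂ] H) + 1 + 1 + (A₀ * A₁ + A₁ * A₀)
        - (A₀ * A₂ + A₂ * A₀) - (A₁ * A₂ + A₂ * A₁) := by
      have h : S₀ * S₀ = A₀ * A₀ + A₁ * A₁ + A₂ * A₂ + (A₀ * A₁ + A₁ * A₀)
          - (A₀ * A₂ + A₂ * A₀) - (A₁ * A₂ + A₂ * A₁) := by rw [hS₀]; noncomm_ring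
      rw [h, qA0, qA1, qA2]
    rw [hexp]
    simp only [ContinuousLinearMap.add_apply, ContinuousLinearMap.sub_apply,
      ContinuousLinearMap.one_apply, inner_add_right, inner_sub_right,
      Complex.add_re, Complex.sub_re]
    rw [hd, he, hf]
    simp only [ContinuousLinearMap.add_apply, inner_add_right, Complex.add_re]
    rw [hψ2]; ring
  have hsq1 : (inner ℂ ψ ((S₁ * S₁) ψ) : ℂ).re = 3 + 2 * d + 2 * (e + f) := by
    have hexp : S₁ * S₁ = (1 : H →L[ℂ] H) + 1 + 1 + (A₀ * A₁ + A₁ * A₀)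
        + (A₀ * A₂ + A₂ * A₀) + (A₁ * A₂ + A₂ * A₁) := by
      have h : S₁ * S₁ = A₀ * A₀ + A₁ * A₁ + A₂ * A₂ + (A₀ * A₁ + A₁ * A₀)
          + (A₀ * A₂ + A₂ * A₀) + (A₁ * A₂ + A₂ * A₁) := by rw [hS₁]; noncomm_ring
      rw [h, qA0, qA1, qA2]
    rw [hexp]
    simp only [ContinuousLinearMap.add_apply, ContinuousLinearMap.one_apply,
      inner_add_right, Complex.add_re]
    rw [hd, he, hf]
    simp only [ContinuousLinearMap.add_apply, inner_add_right, Complex.add_re]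
    rw [hψ2]; ring
  have hsq2 : (inner ℂ ψ ((S₂ * S₂) ψ) : ℂ).re = 2 - 2 * d := by
    have hexp : S₂ * S₂ = (1 : H →L[ℂ] H) + 1 - (A₀ * A₁ + A₁ * A₀) := by
      have h : S₂ * S₂ = A₀ * A₀ + A₁ * A₁ - (A₀ * A₁ + A₁ * A₀) := by
        rw [hS₂]; noncomm_ring
      rw [h, qA0, qA1]
    rw [hexp]
    simp only [ContinuousLinearMap.add_apply, ContinuousLinearMap.sub_apply,
      ContinuousLinearMap.one_apply, inner_add_right, inner_sub_right,
      Complex.add_re, Complex.sub_re]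
    rw [hd]
    simp only [ContinuousLinearMap.add_apply, inner_add_right, Complex.add_re]
    rw [hψ2]; ring
  have k0 := i3322_key ψ hψ S₀ B₀ sS0 sB0 qB0
  have k1 := i3322_key ψ hψ S₁ B₁ sS1 sB1 qB1
  have k2 := i3322_key ψ hψ S₂ B₂ sS2 sB2 qB2
  rw [hsq0] at k0; rw [hsq1] at k1; rw [hsq2] at k2
  rw [hsplit]
  calc |(inner ℂ ψ ((S₀ * B₀) ψ) : ℂ).re + (inner ℂ ψ ((S₁ * B₁) ψ) : ℂ).re
        + (inner ℂ ψ ((S₂ * B₂) ψ) : ℂ).re|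
      ≤ |(inner ℂ ψ ((S₀ * B₀) ψ) : ℂ).re| + |(inner ℂ ψ ((S₁ * B₁) ψ) : ℂ).re|
        + |(inner ℂ ψ ((S₂ * B₂) ψ) : ℂ).re| := by
        exact (abs_add_le _ _).trans (by gcongr; exact abs_add_le _ _)
    _ ≤ _ := by gcongr
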